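/- Applying the SMP update at vertex i (updating λ_{e,i} for all e ∈ N_i simultaneously to block-optimality) decreases the dual objective by at least (1/(8|N_i|η))·Σ_{e∈N_i}‖S_{e,i}^λ - μ_i^λ‖₁². -/

import Mathlib

open Finset

noncomputable section

variable {n m d : ℕ}

/-- The endpoint of edge `e` at side `s`. -/
def ep (ends : Fin m → Fin n × Fin n) (e : Fin m) (s : Fin 2) : Fin n :=
  if s = 0 then (ends e).1 else (ends e).2

/-- Unnormalized vertex factor. -/
def vExp (η : ℝ) (ends : Fin m → Fin n × Fin n) (Ci : Fin n → Fin d → ℝ)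
    (lam : Fin m → Fin 2 → Fin d → ℝ) (i : Fin n) (x : Fin d) : ℝ :=
  Real.exp (η * (-(Ci i x) +
    ∑ e, ∑ s, if ep ends e s = i then lam e s x else 0))

/-- Unnormalized edge factor. -/
def eExp (η : ℝ) (Ce : Fin m → Fin d → Fin d → ℝ)
    (lam : Fin m → Fin 2 → Fin d → ℝ) (e : Fin m) (x₁ x₂ : Fin d) : ℝ :=
  Real.exp (η * (-(Ce e x₁ x₂) - lam e 0 x₁ - lam e 1 x₂))

/-- Normalized vertex pseudo-marginal `μ_i^λ`. -/
def muV (η : ℝ) (ends : Fin m → Fin n × Fin n) (Ci : Fin n → Fin d → ℝ)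
    (lam : Fin m → Fin 2 → Fin d → ℝ) (i : Fin n) (x : Fin d) : ℝ :=
  vExp η ends Ci lam i x / ∑ x', vExp η ends Ci lam i x'

/-- Normalized edge pseudo-marginal `μ_e^λ`. -/
def muE (η : ℝ) (Ce : Fin m → Fin d → Fin d → ℝ)
    (lam : Fin m → Fin 2 → Fin d → ℝ) (e : Fin m) (x₁ x₂ : Fin d) : ℝ :=
  eExp η Ce lam e x₁ x₂ / ∑ y₁, ∑ y₂, eExp η Ce lam e y₁ y₂

/-- Marginalization `S_{e,i}^λ` of the edge pseudo-marginal onto endpoint `s`. -/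
def Smarg (η : ℝ) (Ce : Fin m → Fin d → Fin d → ℝ)
    (lam : Fin m → Fin 2 → Fin d → ℝ) (e : Fin m) (s : Fin 2) (x : Fin d) : ℝ :=
  if s = 0 then ∑ x₂, muE η Ce lam e x x₂ else ∑ x₁, muE η Ce lam e x₁ x

/-- The dual objective `L`. -/
def dualL (η : ℝ) (ends : Fin m → Fin n × Fin n) (Ci : Fin n → Fin d → ℝ)
    (Ce : Fin m → Fin d → Fin d → ℝ) (lam : Fin m → Fin 2 → Fin d → ℝ) : ℝ :=
  (1 / η) * ∑ i, Real.log (∑ x, vExp η ends Ci lam i x)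
    + (1 / η) * ∑ e, Real.log (∑ x₁, ∑ x₂, eExp η Ce lam e x₁ x₂)


lemma hellinger {d : ℕ} (p q : Fin d → ℝ) (hp : ∀ x, 0 ≤ p x) (hq : ∀ x, 0 ≤ q x)
    (hps : ∑ x, p x = 1) (hqs : ∑ x, q x = 1) :
    (∑ x, |p x - q x|) ^ 2 ≤ 8 * (1 - ∑ x, Real.sqrt (q x * p x)) := by
  set B := ∑ x, Real.sqrt (q x * p x) with hB
  have hsq : ∀ x, Real.sqrt (q x * p x) = Real.sqrt (q x) * Real.sqrt (p x) := fun x =>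
    Real.sqrt_mul (hq x) _
  have hB1 : B ≤ 1 := by
    rw [hB]
    calc ∑ x, Real.sqrt (q x * p x) ≤ ∑ x, (q x + p x) / 2 := by
          refine Finset.sum_le_sum fun x _ => ?_
          rw [hsq]
          nlinarith [Real.sq_sqrt (hq x), Real.sq_sqrt (hp x), sq_nonneg (Real.sqrt (q x) - Real.sqrt (p x))]
      _ = 1 := by rw [← Finset.sum_div, Finset.sum_add_distrib, hps, hqs]; norm_num
  have key : (∑ x, |p x - q x|) ^ 2 ≤ (2 - 2 * B) * (2 + 2 * B) := by
    have hCS := Finset.sum_mul_sq_le_sq_mul_sq Finset.univ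
      (fun x => |Real.sqrt (p x) - Real.sqrt (q x)|) (fun x => Real.sqrt (p x) + Real.sqrt (q x))
    have h1 : ∀ x, |Real.sqrt (p x) - Real.sqrt (q x)| * (Real.sqrt (p x) + Real.sqrt (q x))
        = |p x - q x| := by
      intro x
      rw [← abs_of_nonneg (add_nonneg (Real.sqrt_nonneg _) (Real.sqrt_nonneg _)), ← abs_mul]
      congr 1
      nlinarith [Real.sq_sqrt (hp x), Real.sq_sqrt (hq x)]
    have h2 : ∑ x, |Real.sqrt (p x) - Real.sqrt (q x)| ^ 2 = 2 - 2 * B := by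
      rw [hB]
      have : ∀ x, |Real.sqrt (p x) - Real.sqrt (q x)| ^ 2
          = p x + q x - 2 * Real.sqrt (q x * p x) := by
        intro x
        rw [sq_abs, hsq]
        nlinarith [Real.sq_sqrt (hp x), Real.sq_sqrt (hq x)]
      simp only [this]
      rw [Finset.sum_sub_distrib, Finset.sum_add_distrib, hps, hqs, ← Finset.mul_sum]
      ring
    have h3 : ∑ x, (Real.sqrt (p x) + Real.sqrt (q x)) ^ 2 = 2 + 2 * B := by
      rw [hB]
      have : ∀ x, (Real.sqrt (p x) + Real.sqrt (q x)) ^ 2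
          = p x + q x + 2 * Real.sqrt (q x * p x) := by
        intro x
        rw [hsq]
        nlinarith [Real.sq_sqrt (hp x), Real.sq_sqrt (hq x)]
      simp only [this]
      rw [Finset.sum_add_distrib, Finset.sum_add_distrib, hps, hqs, ← Finset.mul_sum]
      ring
    calc (∑ x, |p x - q x|) ^ 2
        = (∑ x, |Real.sqrt (p x) - Real.sqrt (q x)| * (Real.sqrt (p x) + Real.sqrt (q x))) ^ 2 := by
          simp only [h1]
      _ ≤ (∑ x, |Real.sqrt (p x) - Real.sqrt (q x)| ^ 2) * ∑ x, (Real.sqrt (p x) + Real.sqrt (q x)) ^ 2 := hCS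
      _ = (2 - 2 * B) * (2 + 2 * B) := by rw [h2, h3]
  have hBnn : 0 ≤ B := Finset.sum_nonneg fun x _ => Real.sqrt_nonneg _
  nlinarith [key]

lemma analytic {ι : Type*} {d : ℕ} (hd : 0 < d) (N : Finset ι) (hN : N.Nonempty)
    (μ : Fin d → ℝ) (S : ι → Fin d → ℝ)
    (hμ : ∀ x, 0 < μ x) (hμs : ∑ x, μ x = 1)
    (hS : ∀ p ∈ N, ∀ x, 0 < S p x) (hSs : ∀ p ∈ N, ∑ x, S p x = 1) :
    (1 / (8 * (N.card : ℝ))) * ∑ p ∈ N, (∑ x, |S p x - μ x|) ^ 2 ≤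
      ((N.card : ℝ) + 1) *
        (- Real.log (∑ x, (μ x * ∏ p ∈ N, S p x) ^ (((N.card : ℝ) + 1)⁻¹))) := by
  haveI : Nonempty (Fin d) := ⟨⟨0, hd⟩⟩
  set K : ℝ := (N.card : ℝ) with hKdef
  have hK1 : 1 ≤ K := by
    have h : (1:ℕ) ≤ N.card := Finset.card_pos.2 hN
    rw [hKdef]; exact_mod_cast h
  have hKpos : 0 < K := lt_of_lt_of_le one_pos hK1
  set α : ℝ := (K + 1)⁻¹ with hαdef
  have hαpos : 0 < α := by positivity
  have hKα : (K + 1) * α = 1 := by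
    rw [hαdef]; field_simp
  have h2α : 2 * α ≤ 1 := by
    nlinarith [mul_nonneg (by linarith : (0:ℝ) ≤ K - 1) hαpos.le]
  have hαK : 1 - α = K * α := by nlinarith [hKα]
  have hG : ∀ x, 0 < μ x * ∏ p ∈ N, S p x := fun x =>
    mul_pos (hμ x) (Finset.prod_pos fun p hp => hS p hp x)
  -- Step A
  have stepA : ∀ x, (μ x * ∏ p ∈ N, S p x) ^ α
      ≤ ∑ p ∈ N, (1 / K) * (μ x ^ α * S p x ^ (1 - α)) := by
    intro x
    have hw : ∀ p ∈ N, (0:ℝ) ≤ 1 / K := fun _ _ => le_of_lt (by positivity)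
    have hw' : ∑ _p ∈ N, (1:ℝ) / K = 1 := by
      rw [Finset.sum_const, nsmul_eq_mul, ← hKdef]; field_simp
    have hz : ∀ p ∈ N, 0 ≤ μ x ^ α * S p x ^ (1 - α) := fun p hp =>
      mul_nonneg (Real.rpow_nonneg (hμ x).le _) (Real.rpow_nonneg (hS p hp x).le _)
    have hAM := Real.geom_mean_le_arith_mean_weighted N (fun _ => 1 / K)
      (fun p => μ x ^ α * S p x ^ (1 - α)) hw hw' hz
    refine le_trans (le_of_eq ?_) hAM
    have hterm : ∀ p ∈ N, (μ x ^ α * S p x ^ (1 - α)) ^ ((1:ℝ) / K)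
        = μ x ^ (α * (1 / K)) * S p x ^ α := by
      intro p hp
      rw [Real.mul_rpow (Real.rpow_nonneg (hμ x).le _) (Real.rpow_nonneg (hS p hp x).le _),
        ← Real.rpow_mul (hμ x).le, ← Real.rpow_mul (hS p hp x).le]
      congr 1
      rw [hαK]; field_simp
    rw [Finset.prod_congr rfl hterm, Finset.prod_mul_distrib, Finset.prod_const,
      Real.finset_prod_rpow N _ (fun p hp => (hS p hp x).le),
      ← Real.rpow_natCast (μ x ^ (α * (1 / K))) N.card,
      ← Real.rpow_mul (hμ x).le,
      Real.mul_rpow (hμ x).le (Finset.prod_nonneg fun p hp => (hS p hp x).le)]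
    congr 2
    rw [← hKdef]; field_simp
  -- Step B
  have stepB : ∀ p ∈ N, ∑ x, μ x ^ α * S p x ^ (1 - α)
      ≤ 1 - 2 * α * (1 - ∑ x, Real.sqrt (μ x * S p x)) := by
    intro p hp
    have pt : ∀ x, μ x ^ α * S p x ^ (1 - α)
        ≤ (1 - 2 * α) * S p x + 2 * α * Real.sqrt (μ x * S p x) := by
      intro x
      have hAM := Real.geom_mean_le_arith_mean2_weighted
        (w₁ := 1 - 2 * α) (w₂ := 2 * α) (p₁ := S p x) (p₂ := Real.sqrt (μ x * S p x))
        (by linarith) (by positivity) (hS p hp x).le (Real.sqrt_nonneg _) (by ring)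
      refine le_trans (le_of_eq ?_) hAM
      have e1 : Real.sqrt (μ x * S p x) ^ (2 * α) = μ x ^ α * S p x ^ α := by
        rw [Real.sqrt_eq_rpow, ← Real.rpow_mul (mul_nonneg (hμ x).le (hS p hp x).le),
          show (1:ℝ) / 2 * (2 * α) = α by ring,
          Real.mul_rpow (hμ x).le (hS p hp x).le]
      have e2 : S p x ^ ((1:ℝ) - 2 * α) * S p x ^ α = S p x ^ (1 - α) := by
        rw [← Real.rpow_add (hS p hp x)]; ring_nf
      calc μ x ^ α * S p x ^ (1 - α)
          = μ x ^ α * (S p x ^ ((1:ℝ) - 2 * α) * S p x ^ α) := by rw [e2]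
        _ = S p x ^ ((1:ℝ) - 2 * α) * Real.sqrt (μ x * S p x) ^ (2 * α) := by
            rw [e1]; ring
    calc ∑ x, μ x ^ α * S p x ^ (1 - α)
        ≤ ∑ x, ((1 - 2 * α) * S p x + 2 * α * Real.sqrt (μ x * S p x)) :=
          Finset.sum_le_sum fun x _ => pt x
      _ = (1 - 2 * α) * ∑ x, S p x + 2 * α * ∑ x, Real.sqrt (μ x * S p x) := by
          rw [Finset.sum_add_distrib, ← Finset.mul_sum, ← Finset.mul_sum]
      _ = 1 - 2 * α * (1 - ∑ x, Real.sqrt (μ x * S p x)) := by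
          rw [hSs p hp]; ring
  -- Hellinger bounds
  have hhell : ∀ p ∈ N, (∑ x, |S p x - μ x|) ^ 2
      ≤ 8 * (1 - ∑ x, Real.sqrt (μ x * S p x)) := fun p hp =>
    hellinger (S p) μ (fun x => (hS p hp x).le) (fun x => (hμ x).le) (hSs p hp) hμs
  have hBnn : ∀ p ∈ N, 0 ≤ 1 - ∑ x, Real.sqrt (μ x * S p x) := by
    intro p hp
    nlinarith [hhell p hp, sq_nonneg (∑ x, |S p x - μ x|)]
  set Z : ℝ := ∑ x, (μ x * ∏ p ∈ N, S p x) ^ α with hZdef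
  have hZpos : 0 < Z :=
    Finset.sum_pos (fun x _ => Real.rpow_pos_of_pos (hG x) α) Finset.univ_nonempty
  set T : ℝ := ∑ p ∈ N, (1 - ∑ x, Real.sqrt (μ x * S p x)) with hTdef
  have hTnn : 0 ≤ T := Finset.sum_nonneg hBnn
  have hZle : Z ≤ 1 - (2 * α / K) * T := by
    calc Z ≤ ∑ x, ∑ p ∈ N, (1 / K) * (μ x ^ α * S p x ^ (1 - α)) :=
          Finset.sum_le_sum fun x _ => stepA x
      _ = ∑ p ∈ N, (1 / K) * ∑ x, (μ x ^ α * S p x ^ (1 - α)) := by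
          rw [Finset.sum_comm]
          exact Finset.sum_congr rfl fun p _ => (Finset.mul_sum _ _ _).symm
      _ ≤ ∑ p ∈ N, (1 / K) * (1 - 2 * α * (1 - ∑ x, Real.sqrt (μ x * S p x))) :=
          Finset.sum_le_sum fun p hp =>
            mul_le_mul_of_nonneg_left (stepB p hp) (by positivity)
      _ = ∑ p ∈ N, (1 / K - (2 * α / K) * (1 - ∑ x, Real.sqrt (μ x * S p x))) :=
          Finset.sum_congr rfl fun p _ => by ring
      _ = 1 - (2 * α / K) * T := by
          rw [Finset.sum_sub_distrib, Finset.sum_const, nsmul_eq_mul, ← Finset.mul_sum,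
            ← hKdef, ← hTdef]
          field_simp
  have hlog : 1 - Z ≤ - Real.log Z := by
    have := Real.log_le_sub_one_of_pos hZpos
    linarith
  have hW : ∑ p ∈ N, (∑ x, |S p x - μ x|) ^ 2 ≤ 8 * T := by
    rw [hTdef, Finset.mul_sum]
    exact Finset.sum_le_sum hhell
  have hWnn : 0 ≤ ∑ p ∈ N, (∑ x, |S p x - μ x|) ^ 2 :=
    Finset.sum_nonneg fun p _ => sq_nonneg _
  calc (1 / (8 * K)) * ∑ p ∈ N, (∑ x, |S p x - μ x|) ^ 2
      ≤ (1 / (8 * K)) * (8 * T) :=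
        mul_le_mul_of_nonneg_left hW (by positivity)
    _ = (1 / K) * T := by field_simp
    _ ≤ (2 / K) * T := by
        apply mul_le_mul_of_nonneg_right _ hTnn
        gcongr
        · norm_num
    _ = (K + 1) * ((2 * α / K) * T) := by
        rw [show (K + 1) * ((2 * α / K) * T) = ((K + 1) * α) * (2 / K) * T by ring, hKα]
        ring
    _ ≤ (K + 1) * (1 - Z) := by
        apply mul_le_mul_of_nonneg_left _ (by positivity)
        linarith
    _ ≤ (K + 1) * (- Real.log Z) :=
        mul_le_mul_of_nonneg_left hlog (by positivity)

section Helpers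
variable (η : ℝ) (ends : Fin m → Fin n × Fin n) (Ci : Fin n → Fin d → ℝ)
  (Ce : Fin m → Fin d → Fin d → ℝ) (lam : Fin m → Fin 2 → Fin d → ℝ)

lemma sum_vExp_pos (hd0 : 0 < d) (i : Fin n) :
    0 < ∑ x, vExp η ends Ci lam i x := by
  haveI : Nonempty (Fin d) := ⟨⟨0, hd0⟩⟩
  exact Finset.sum_pos (fun x _ => Real.exp_pos _) Finset.univ_nonempty

lemma sum_eExp_pos (hd0 : 0 < d) (e : Fin m) :
    0 < ∑ x₁, ∑ x₂, eExp η Ce lam e x₁ x₂ := by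
  haveI : Nonempty (Fin d) := ⟨⟨0, hd0⟩⟩
  exact Finset.sum_pos
    (fun x _ => Finset.sum_pos (fun y _ => Real.exp_pos _) Finset.univ_nonempty)
    Finset.univ_nonempty

lemma muV_pos (hd0 : 0 < d) (i : Fin n) (x : Fin d) :
    0 < muV η ends Ci lam i x :=
  div_pos (Real.exp_pos _) (sum_vExp_pos η ends Ci lam hd0 i)

lemma muV_sum (hd0 : 0 < d) (i : Fin n) :
    ∑ x, muV η ends Ci lam i x = 1 := by
  unfold muV
  rw [← Finset.sum_div]
  exact div_self (sum_vExp_pos η ends Ci lam hd0 i).ne'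

lemma muE_pos (hd0 : 0 < d) (e : Fin m) (x₁ x₂ : Fin d) :
    0 < muE η Ce lam e x₁ x₂ :=
  div_pos (Real.exp_pos _) (sum_eExp_pos η Ce lam hd0 e)

lemma Smarg_pos (hd0 : 0 < d) (e : Fin m) (s : Fin 2) (x : Fin d) :
    0 < Smarg η Ce lam e s x := by
  haveI : Nonempty (Fin d) := ⟨⟨0, hd0⟩⟩
  unfold Smarg
  split <;>
    exact Finset.sum_pos (fun y _ => muE_pos η Ce lam hd0 e _ _) Finset.univ_nonempty

lemma Smarg_sum (hd0 : 0 < d) (e : Fin m) (s : Fin 2) :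
    ∑ x, Smarg η Ce lam e s x = 1 := by
  have hZ := (sum_eExp_pos η Ce lam hd0 e).ne'
  unfold Smarg muE
  split
  · simp only [← Finset.sum_div]
    exact div_self hZ
  · rw [Finset.sum_comm]
    simp only [← Finset.sum_div]
    exact div_self hZ

lemma sum_eExp_right (hd0 : 0 < d) (e : Fin m) (x₁ : Fin d) :
    ∑ x₂, eExp η Ce lam e x₁ x₂
      = (∑ y₁, ∑ y₂, eExp η Ce lam e y₁ y₂) * Smarg η Ce lam e 0 x₁ := by
  unfold Smarg muE
  rw [if_pos rfl, ← Finset.sum_div, mul_div_cancel₀ _ (sum_eExp_pos η Ce lam hd0 e).ne']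

lemma sum_eExp_left (hd0 : 0 < d) (e : Fin m) (x₂ : Fin d) :
    ∑ x₁, eExp η Ce lam e x₁ x₂
      = (∑ y₁, ∑ y₂, eExp η Ce lam e y₁ y₂) * Smarg η Ce lam e 1 x₂ := by
  unfold Smarg muE
  rw [if_neg (by decide : ¬(1 : Fin 2) = 0), ← Finset.sum_div,
    mul_div_cancel₀ _ (sum_eExp_pos η Ce lam hd0 e).ne']

lemma vExp_update (D : Fin m → Fin 2 → Fin d → ℝ) (i : Fin n) (x : Fin d) :
    vExp η ends Ci (fun e s x => lam e s x + D e s x) i x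
      = vExp η ends Ci lam i x *
          Real.exp (η * ∑ e, ∑ s, if ep ends e s = i then D e s x else 0) := by
  unfold vExp
  rw [← Real.exp_add]
  congr 1
  have h : ∀ e : Fin m, ∀ s : Fin 2, (if ep ends e s = i then lam e s x + D e s x else 0)
      = (if ep ends e s = i then lam e s x else 0)
        + (if ep ends e s = i then D e s x else 0) := by
    intro e s; split <;> simp
  simp only [h, Finset.sum_add_distrib]
  ring

lemma eExp_update (D : Fin m → Fin 2 → Fin d → ℝ) (e : Fin m) (x₁ x₂ : Fin d) :
    eExp η Ce (fun e s x => lam e s x + D e s x) e x₁ x₂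
      = eExp η Ce lam e x₁ x₂ * Real.exp (-(η * (D e 0 x₁ + D e 1 x₂))) := by
  unfold eExp
  rw [← Real.exp_add]
  congr 1
  ring

end Helpers

section Drop
variable (η : ℝ) (ends : Fin m → Fin n × Fin n) (Ci : Fin n → Fin d → ℝ)
  (Ce : Fin m → Fin d → Fin d → ℝ) (lam : Fin m → Fin 2 → Fin d → ℝ) (i₀ : Fin n)

/-- The geometric-mean function `G(x) = μ_{i₀}(x) ∏_{p ∈ N} S_p(x)`. -/
def Gf (x : Fin d) : ℝ :=
  muV η ends Ci lam i₀ x *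
    ∏ p ∈ Finset.univ.filter (fun p : Fin m × Fin 2 => ep ends p.1 p.2 = i₀),
      Smarg η Ce lam p.1 p.2 x

/-- The explicit SMP update at vertex `i₀`. -/
def lamU : Fin m → Fin 2 → Fin d → ℝ := fun e s x =>
  lam e s x + (if ep ends e s = i₀ then
    η⁻¹ * Real.log (Smarg η Ce lam e s x)
      - η⁻¹ * (((Finset.univ.filter
          (fun p : Fin m × Fin 2 => ep ends p.1 p.2 = i₀)).card : ℝ) + 1)⁻¹
        * Real.log (Gf η ends Ci Ce lam i₀ x)
    else 0)

lemma dual_drop (hη : 0 < η) (hd0 : 0 < d)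
    (hsimple : ∀ e, (ends e).1 ≠ (ends e).2) :
    dualL η ends Ci Ce lam - dualL η ends Ci Ce (lamU η ends Ci Ce lam i₀)
      = (1 / η) * ((((Finset.univ.filter
            (fun p : Fin m × Fin 2 => ep ends p.1 p.2 = i₀)).card : ℝ) + 1)
          * (- Real.log (∑ x, Gf η ends Ci Ce lam i₀ x
              ^ ((((Finset.univ.filter
                (fun p : Fin m × Fin 2 => ep ends p.1 p.2 = i₀)).card : ℝ) + 1)⁻¹)))) := by
  haveI : Nonempty (Fin d) := ⟨⟨0, hd0⟩⟩
  have hη' : η ≠ 0 := hη.ne'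
  set N := Finset.univ.filter (fun p : Fin m × Fin 2 => ep ends p.1 p.2 = i₀) with hN
  have hK1 : (0:ℝ) < (N.card : ℝ) + 1 := by positivity
  set α : ℝ := ((N.card : ℝ) + 1)⁻¹ with hα
  set G : Fin d → ℝ := Gf η ends Ci Ce lam i₀ with hGdef
  set Z : ℝ := ∑ x, G x ^ α with hZ
  set L2 : Fin m → Fin 2 → Fin d → ℝ := lamU η ends Ci Ce lam i₀ with hL2
  set Dd : Fin m → Fin 2 → Fin d → ℝ := fun e s x =>
    if ep ends e s = i₀ then
      η⁻¹ * Real.log (Smarg η Ce lam e s x) - η⁻¹ * α * Real.log (G x)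
    else 0 with hDd
  have hL2D : L2 = fun e s x => lam e s x + Dd e s x := by
    rw [hL2, hDd, hα, hGdef, hN]; rfl
  have hGpos : ∀ x, 0 < G x := by
    intro x
    rw [hGdef]
    unfold Gf
    exact mul_pos (muV_pos η ends Ci lam hd0 i₀ x)
      (Finset.prod_pos fun p _ => Smarg_pos η Ce lam hd0 p.1 p.2 x)
  have hZpos : 0 < Z := by
    rw [hZ]
    exact Finset.sum_pos (fun x _ => Real.rpow_pos_of_pos (hGpos x) _)
      Finset.univ_nonempty
  have hZv := sum_vExp_pos η ends Ci lam hd0 i₀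
  have hZe := fun e => sum_eExp_pos η Ce lam hd0 e
  -- the exponential factor at vertex i₀
  have hsumD : ∀ x, η * (∑ e, ∑ s, if ep ends e s = i₀ then Dd e s x else 0)
      = Real.log (∏ p ∈ N, Smarg η Ce lam p.1 p.2 x)
        + (-((N.card : ℝ) * α)) * Real.log (G x) := by
    intro x
    have e1 : ∀ (e : Fin m) (s : Fin 2), (if ep ends e s = i₀ then Dd e s x else 0)
        = if ep ends e s = i₀ then
            η⁻¹ * Real.log (Smarg η Ce lam e s x) - η⁻¹ * α * Real.log (G x)
          else 0 := by
      intro e s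
      by_cases h : ep ends e s = i₀ <;> simp [hDd, h]
    simp only [e1]
    have hre : (∑ e : Fin m, ∑ s : Fin 2, if ep ends e s = i₀ then
          η⁻¹ * Real.log (Smarg η Ce lam e s x) - η⁻¹ * α * Real.log (G x) else 0)
        = ∑ p ∈ N, (η⁻¹ * Real.log (Smarg η Ce lam p.1 p.2 x)
            - η⁻¹ * α * Real.log (G x)) := by
      rw [hN, Finset.sum_filter]
      exact (Fintype.sum_prod_type
        (fun p : Fin m × Fin 2 => if ep ends p.1 p.2 = i₀ then
          η⁻¹ * Real.log (Smarg η Ce lam p.1 p.2 x)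
            - η⁻¹ * α * Real.log (G x) else 0)).symm
    rw [hre, Finset.mul_sum]
    have hgen1 : ∀ a b : ℝ, η * (η⁻¹ * a - η⁻¹ * α * b) = a - α * b := by
      intro a b; field_simp
    rw [Finset.sum_congr rfl (fun p _ =>
      hgen1 (Real.log (Smarg η Ce lam p.1 p.2 x)) (Real.log (G x)))]
    rw [Finset.sum_sub_distrib,
      ← Real.log_prod (fun p _ => (Smarg_pos η Ce lam hd0 p.1 p.2 x).ne'),
      Finset.sum_const, nsmul_eq_mul]
    ring
  have hvfac : ∀ x, Real.exp (η * ∑ e, ∑ s, if ep ends e s = i₀ then Dd e s x else 0)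
      = (∏ p ∈ N, Smarg η Ce lam p.1 p.2 x) * G x ^ (-((N.card : ℝ) * α)) := by
    intro x
    rw [hsumD x, Real.exp_add,
      Real.exp_log (Finset.prod_pos fun p _ => Smarg_pos η Ce lam hd0 p.1 p.2 x),
      mul_comm (-((N.card : ℝ) * α)) (Real.log (G x)),
      ← Real.rpow_def_of_pos (hGpos x)]
  -- vertex i₀
  have hvi₀ : ∑ x, vExp η ends Ci L2 i₀ x = (∑ x, vExp η ends Ci lam i₀ x) * Z := by
    rw [hL2D]
    have hpt : ∀ x, vExp η ends Ci (fun e s x => lam e s x + Dd e s x) i₀ x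
        = (∑ x', vExp η ends Ci lam i₀ x') * G x ^ α := by
      intro x
      rw [vExp_update, hvfac x]
      have hv : vExp η ends Ci lam i₀ x
          = muV η ends Ci lam i₀ x * ∑ x', vExp η ends Ci lam i₀ x' := by
        unfold muV
        field_simp
      rw [hv]
      have hμS : muV η ends Ci lam i₀ x * ∏ p ∈ N, Smarg η Ce lam p.1 p.2 x = G x := by
        rw [hGdef]
        unfold Gf
        rw [← hN]
      calc muV η ends Ci lam i₀ x * (∑ x', vExp η ends Ci lam i₀ x')
            * ((∏ p ∈ N, Smarg η Ce lam p.1 p.2 x) * G x ^ (-((N.card : ℝ) * α)))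
          = (∑ x', vExp η ends Ci lam i₀ x')
            * ((muV η ends Ci lam i₀ x * ∏ p ∈ N, Smarg η Ce lam p.1 p.2 x)
              * G x ^ (-((N.card : ℝ) * α))) := by ring
        _ = (∑ x', vExp η ends Ci lam i₀ x') * (G x * G x ^ (-((N.card : ℝ) * α))) := by
            rw [hμS]
        _ = (∑ x', vExp η ends Ci lam i₀ x') * G x ^ α := by
            congr 1
            nth_rewrite 1 [← Real.rpow_one (G x)]
            rw [← Real.rpow_add (hGpos x)]
            congr 1
            have hgen : ∀ k : ℝ, 0 ≤ k → 1 + -(k * (k + 1)⁻¹) = (k + 1)⁻¹ := by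
              intro k hk
              have hk1 : k + 1 ≠ 0 := by positivity
              field_simp
              ring
            rw [hα]
            exact hgen _ (Nat.cast_nonneg _)
    rw [Finset.sum_congr rfl fun x _ => hpt x, ← Finset.mul_sum, ← hZ]
  -- other vertices
  have hvother : ∀ i, i ≠ i₀ → ∑ x, vExp η ends Ci L2 i x = ∑ x, vExp η ends Ci lam i x := by
    intro i hi
    rw [hL2D]
    refine Finset.sum_congr rfl fun x _ => ?_
    rw [vExp_update]
    have hz : (∑ e : Fin m, ∑ s : Fin 2, if ep ends e s = i then Dd e s x else 0) = 0 := by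
      refine Finset.sum_eq_zero fun e _ => Finset.sum_eq_zero fun s _ => ?_
      by_cases h : ep ends e s = i
      · rw [if_pos h]
        simp only [hDd]
        rw [if_neg (by rw [h]; exact hi)]
      · rw [if_neg h]
    rw [hz, mul_zero, Real.exp_zero, mul_one]
  have hA : ∑ i, Real.log (∑ x, vExp η ends Ci L2 i x)
      = (∑ i, Real.log (∑ x, vExp η ends Ci lam i x)) + Real.log Z := by
    have key : ∀ i : Fin n, Real.log (∑ x, vExp η ends Ci L2 i x)
        = Real.log (∑ x, vExp η ends Ci lam i x) + (if i = i₀ then Real.log Z else 0) := by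
      intro i
      by_cases hi : i = i₀
      · subst hi
        rw [hvi₀, Real.log_mul hZv.ne' hZpos.ne', if_pos rfl]
      · rw [hvother i hi, if_neg hi, add_zero]
    rw [Finset.sum_congr rfl fun i _ => key i, Finset.sum_add_distrib,
      Finset.sum_ite_eq' Finset.univ i₀ fun _ => Real.log Z, if_pos (Finset.mem_univ _)]
  -- edges
  have hedge : ∀ e : Fin m, Real.log (∑ x₁, ∑ x₂, eExp η Ce L2 e x₁ x₂)
      = Real.log (∑ x₁, ∑ x₂, eExp η Ce lam e x₁ x₂)
        + ((if ep ends e 0 = i₀ then (1:ℝ) else 0)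
            + (if ep ends e 1 = i₀ then (1:ℝ) else 0)) * Real.log Z := by
    intro e
    have hexpD : ∀ (s : Fin 2) (x : Fin d), ep ends e s = i₀ →
        Real.exp (-(η * Dd e s x)) = (Smarg η Ce lam e s x)⁻¹ * G x ^ α := by
      intro s x h
      have hval : η * Dd e s x = Real.log (Smarg η Ce lam e s x) - α * Real.log (G x) := by
        simp only [hDd]
        rw [if_pos h]
        have hgen1 : ∀ a b : ℝ, η * (η⁻¹ * a - η⁻¹ * α * b) = a - α * b := by
          intro a b; field_simp
        exact hgen1 _ _
      rw [show -(η * Dd e s x)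
            = -Real.log (Smarg η Ce lam e s x) + Real.log (G x) * α from by
          rw [hval]; ring,
        Real.exp_add, Real.exp_neg, Real.exp_log (Smarg_pos η Ce lam hd0 e s x),
        ← Real.rpow_def_of_pos (hGpos x)]
    have hD0 : ∀ (s : Fin 2) (x : Fin d), ep ends e s ≠ i₀ → Dd e s x = 0 := by
      intro s x h
      simp only [hDd]
      rw [if_neg h]
    by_cases h0 : ep ends e 0 = i₀ <;> by_cases h1 : ep ends e 1 = i₀
    · exfalso
      apply hsimple e
      have g0 : (ends e).1 = i₀ := h0
      have g1 : (ends e).2 = i₀ := h1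
      rw [g0, g1]
    · have hsum : ∑ x₁, ∑ x₂, eExp η Ce L2 e x₁ x₂
          = (∑ x₁, ∑ x₂, eExp η Ce lam e x₁ x₂) * Z := by
        rw [hL2D]
        calc ∑ x₁, ∑ x₂, eExp η Ce (fun e s x => lam e s x + Dd e s x) e x₁ x₂
            = ∑ x₁, ∑ x₂, eExp η Ce lam e x₁ x₂
                * ((Smarg η Ce lam e 0 x₁)⁻¹ * G x₁ ^ α) := by
              refine Finset.sum_congr rfl fun x₁ _ => Finset.sum_congr rfl fun x₂ _ => ?_
              rw [eExp_update, hD0 1 x₂ h1, add_zero, hexpD 0 x₁ h0]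
          _ = ∑ x₁, ((∑ y₁, ∑ y₂, eExp η Ce lam e y₁ y₂) * Smarg η Ce lam e 0 x₁)
                * ((Smarg η Ce lam e 0 x₁)⁻¹ * G x₁ ^ α) := by
              refine Finset.sum_congr rfl fun x₁ _ => ?_
              rw [← Finset.sum_mul, sum_eExp_right η Ce lam hd0 e x₁]
          _ = ∑ x₁, (∑ y₁, ∑ y₂, eExp η Ce lam e y₁ y₂) * G x₁ ^ α := by
              refine Finset.sum_congr rfl fun x₁ _ => ?_
              have hs := (Smarg_pos η Ce lam hd0 e 0 x₁).ne'
              field_simp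
          _ = (∑ x₁, ∑ x₂, eExp η Ce lam e x₁ x₂) * Z := by
              rw [← Finset.mul_sum, ← hZ]
      rw [hsum, Real.log_mul (hZe e).ne' hZpos.ne', if_pos h0, if_neg h1]
      ring
    · have hsum : ∑ x₁, ∑ x₂, eExp η Ce L2 e x₁ x₂
          = (∑ x₁, ∑ x₂, eExp η Ce lam e x₁ x₂) * Z := by
        rw [hL2D]
        calc ∑ x₁, ∑ x₂, eExp η Ce (fun e s x => lam e s x + Dd e s x) e x₁ x₂
            = ∑ x₁, ∑ x₂, eExp η Ce lam e x₁ x₂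
                * ((Smarg η Ce lam e 1 x₂)⁻¹ * G x₂ ^ α) := by
              refine Finset.sum_congr rfl fun x₁ _ => Finset.sum_congr rfl fun x₂ _ => ?_
              rw [eExp_update, hD0 0 x₁ h0, zero_add, hexpD 1 x₂ h1]
          _ = ∑ x₂, ∑ x₁, eExp η Ce lam e x₁ x₂
                * ((Smarg η Ce lam e 1 x₂)⁻¹ * G x₂ ^ α) := Finset.sum_comm
          _ = ∑ x₂, ((∑ y₁, ∑ y₂, eExp η Ce lam e y₁ y₂) * Smarg η Ce lam e 1 x₂)
                * ((Smarg η Ce lam e 1 x₂)⁻¹ * G x₂ ^ α) := by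
              refine Finset.sum_congr rfl fun x₂ _ => ?_
              rw [← Finset.sum_mul, sum_eExp_left η Ce lam hd0 e x₂]
          _ = ∑ x₂, (∑ y₁, ∑ y₂, eExp η Ce lam e y₁ y₂) * G x₂ ^ α := by
              refine Finset.sum_congr rfl fun x₂ _ => ?_
              have hs := (Smarg_pos η Ce lam hd0 e 1 x₂).ne'
              field_simp
          _ = (∑ x₁, ∑ x₂, eExp η Ce lam e x₁ x₂) * Z := by
              rw [← Finset.mul_sum, ← hZ]
      rw [hsum, Real.log_mul (hZe e).ne' hZpos.ne', if_neg h0, if_pos h1]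
      ring
    · have hsum : ∑ x₁, ∑ x₂, eExp η Ce L2 e x₁ x₂
          = ∑ x₁, ∑ x₂, eExp η Ce lam e x₁ x₂ := by
        rw [hL2D]
        refine Finset.sum_congr rfl fun x₁ _ => Finset.sum_congr rfl fun x₂ _ => ?_
        rw [eExp_update, hD0 0 x₁ h0, hD0 1 x₂ h1, add_zero, mul_zero, neg_zero,
          Real.exp_zero, mul_one]
      rw [hsum, if_neg h0, if_neg h1]
      ring
  have hcard : ((N.card : ℝ)) = ∑ e : Fin m,
      ((if ep ends e 0 = i₀ then (1:ℝ) else 0) + (if ep ends e 1 = i₀ then (1:ℝ) else 0)) := by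
    have h1 : N.card = ∑ p : Fin m × Fin 2, (if ep ends p.1 p.2 = i₀ then 1 else 0) := by
      rw [hN, Finset.card_filter]
    rw [h1]
    push_cast
    rw [Fintype.sum_prod_type]
    refine Finset.sum_congr rfl fun e _ => ?_
    rw [Fin.sum_univ_two]
  have hB : ∑ e, Real.log (∑ x₁, ∑ x₂, eExp η Ce L2 e x₁ x₂)
      = (∑ e, Real.log (∑ x₁, ∑ x₂, eExp η Ce lam e x₁ x₂)) + (N.card : ℝ) * Real.log Z := by
    rw [Finset.sum_congr rfl fun e _ => hedge e, Finset.sum_add_distrib,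
      ← Finset.sum_mul, ← hcard]
  unfold dualL
  rw [hA, hB]
  ring

end Drop

/-- SMP improvement: updating the block of dual variables
`{λ_{e,i₀}(x) : e ∈ N_{i₀}, x ∈ χ}` at vertex `i₀` to block-optimality
decreases the dual objective by at least
`(1/(8|N_{i₀}|η)) Σ_{e∈N_{i₀}} ‖S_{e,i₀}^λ - μ_{i₀}^λ‖₁²`. -/
theorem smp_update_improvement (η : ℝ) (hη : 0 < η) (hd : 2 ≤ d)
    (ends : Fin m → Fin n × Fin n)
    (hsimple : ∀ e, (ends e).1 ≠ (ends e).2)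
    (Ci : Fin n → Fin d → ℝ) (Ce : Fin m → Fin d → Fin d → ℝ)
    (lam lam' : Fin m → Fin 2 → Fin d → ℝ) (i₀ : Fin n)
    (hdeg : 0 < (Finset.univ.filter
      (fun p : Fin m × Fin 2 => ep ends p.1 p.2 = i₀)).card)
    (hagree : ∀ e s x, ep ends e s ≠ i₀ → lam' e s x = lam e s x)
    (hopt : ∀ lam'' : Fin m → Fin 2 → Fin d → ℝ,
      (∀ e s x, ep ends e s ≠ i₀ → lam'' e s x = lam e s x) →
      dualL η ends Ci Ce lam' ≤ dualL η ends Ci Ce lam'') :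
    (1 / (8 * ((Finset.univ.filter
          (fun p : Fin m × Fin 2 => ep ends p.1 p.2 = i₀)).card : ℝ) * η)) *
      ∑ p ∈ Finset.univ.filter
          (fun p : Fin m × Fin 2 => ep ends p.1 p.2 = i₀),
        (∑ x, |Smarg η Ce lam p.1 p.2 x - muV η ends Ci lam i₀ x|) ^ 2
      ≤ dualL η ends Ci Ce lam - dualL η ends Ci Ce lam' := by
  have hd0 : 0 < d := by omega
  haveI : Nonempty (Fin d) := ⟨⟨0, hd0⟩⟩
  set N := Finset.univ.filter (fun p : Fin m × Fin 2 => ep ends p.1 p.2 = i₀) with hN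
  have hNne : N.Nonempty := Finset.card_pos.mp hdeg
  have hKpos : (0:ℝ) < (N.card : ℝ) := by exact_mod_cast hdeg
  have hopt2 : dualL η ends Ci Ce lam' ≤ dualL η ends Ci Ce (lamU η ends Ci Ce lam i₀) := by
    apply hopt
    intro e s x h
    unfold lamU
    rw [if_neg h, add_zero]
  have hdrop := dual_drop η ends Ci Ce lam i₀ hη hd0 hsimple
  have hana := analytic hd0 N hNne (muV η ends Ci lam i₀)
      (fun p : Fin m × Fin 2 => Smarg η Ce lam p.1 p.2)
      (fun x => muV_pos η ends Ci lam hd0 i₀ x) (muV_sum η ends Ci lam hd0 i₀)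
      (fun p _ x => Smarg_pos η Ce lam hd0 p.1 p.2 x)
      (fun p _ => Smarg_sum η Ce lam hd0 p.1 p.2)
  have hana' : (1 / (8 * (N.card : ℝ))) *
      ∑ p ∈ N, (∑ x, |Smarg η Ce lam p.1 p.2 x - muV η ends Ci lam i₀ x|) ^ 2
      ≤ ((N.card : ℝ) + 1) *
          (- Real.log (∑ x, Gf η ends Ci Ce lam i₀ x ^ (((N.card : ℝ) + 1)⁻¹))) := hana
  calc (1 / (8 * ((N.card) : ℝ) * η)) *
        ∑ p ∈ N, (∑ x, |Smarg η Ce lam p.1 p.2 x - muV η ends Ci lam i₀ x|) ^ 2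
      = (1 / η) * ((1 / (8 * (N.card : ℝ))) *
          ∑ p ∈ N, (∑ x, |Smarg η Ce lam p.1 p.2 x - muV η ends Ci lam i₀ x|) ^ 2) := by
        rw [show (1:ℝ) / (8 * ((N.card) : ℝ) * η)
            = (1 / η) * (1 / (8 * (N.card : ℝ))) from by
          rw [one_div, mul_inv, one_div, one_div]; ring]
        ring
    _ ≤ (1 / η) * (((N.card : ℝ) + 1) *
          (- Real.log (∑ x, Gf η ends Ci Ce lam i₀ x ^ (((N.card : ℝ) + 1)⁻¹)))) :=
        mul_le_mul_of_nonneg_left hana' (by positivity)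
    _ = dualL η ends Ci Ce lam - dualL η ends Ci Ce (lamU η ends Ci Ce lam i₀) := hdrop.symm
    _ ≤ dualL η ends Ci Ce lam - dualL η ends Ci Ce lam' := by linarith [hopt2]


end
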